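/- Let G = (X, Y, E) be a bipartite graph and M a maximum matching of G. A vertex x ∈ X fails to participate in some maximum matching of G if and only if there exists an even-length alternating path (with respect to M) from x to a vertex that is unmatched by M. -/

import Mathlib

open Finset

variable {α β : Type*}

/-- A matching: no two distinct edges share an X-endpoint or a Y-endpoint. -/
def IsMatching (M : Finset (α × β)) : Prop :=
  (∀ e ∈ M, ∀ f ∈ M, e.1 = f.1 → e = f) ∧ (∀ e ∈ M, ∀ f ∈ M, e.2 = f.2 → e = f)

/-- `M` is a maximum (cardinality) matching of the bipartite graph with edge set `E`. -/
def IsMaxMatching (E M : Finset (α × β)) : Prop :=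
  M ⊆ E ∧ IsMatching M ∧ ∀ M', M' ⊆ E → IsMatching M' → M'.card ≤ M.card

open Classical in
/-- μ(E): size of a maximum matching of the bipartite graph with edge set `E`. -/
noncomputable def mu (E : Finset (α × β)) : ℕ :=
  (E.powerset.filter IsMatching).sup Finset.card

/-- The X-vertex `x` is matched (participates) in `M`. -/
def Matched (M : Finset (α × β)) (x : α) : Prop := ∃ y, (x, y) ∈ M

/-- `x` participates in all maximum matchings of `(X, Y, E)` (i.e. `x ∈ Γ(E)`). -/
def InAllMax (E : Finset (α × β)) (x : α) : Prop :=
  ∀ M, IsMaxMatching E M → Matched M x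

/-- An even-length alternating path (w.r.t. `M`) from `x` to `x'`:
vertices `x = x_0, y_0, x_1, y_1, ..., x_k = x'` with `(x_i, y_i) ∈ M` and
`(x_{i+1}, y_i) ∈ E \ M`, all vertices distinct (2k edges, an even number). -/
def EvenAltPath (E M : Finset (α × β)) (x x' : α) : Prop :=
  ∃ (k : ℕ) (f : Fin (k + 1) → α) (g : Fin k → β),
    Function.Injective f ∧ Function.Injective g ∧
    f 0 = x ∧ f (Fin.last k) = x' ∧
    (∀ i : Fin k, (f i.castSucc, g i) ∈ M) ∧
    (∀ i : Fin k, (f i.succ, g i) ∈ E ∧ (f i.succ, g i) ∉ M)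

section Aux
variable [DecidableEq α] [DecidableEq β]

lemma matching_subset {M A : Finset (α × β)} (h : A ⊆ M) (hM : IsMatching M) :
    IsMatching A :=
  ⟨fun e he f hf => hM.1 e (h he) f (h hf), fun e he f hf => hM.2 e (h he) f (h hf)⟩

lemma matching_surgery {M A R : Finset (α × β)}
    (hM : IsMatching M) (hA : IsMatching A)
    (hd : ∀ e ∈ A, ∀ m ∈ M \ R, e.1 ≠ m.1 ∧ e.2 ≠ m.2) :
    IsMatching ((M \ R) ∪ A) := by
  constructor
  · intro e he f hf h
    simp only [mem_union, mem_sdiff] at he hf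
    rcases he with ⟨heM, heR⟩ | heA
    · rcases hf with ⟨hfM, hfR⟩ | hfA
      · exact hM.1 e heM f hfM h
      · exact absurd h.symm (hd f hfA e (mem_sdiff.2 ⟨heM, heR⟩)).1
    · rcases hf with ⟨hfM, hfR⟩ | hfA
      · exact absurd h (hd e heA f (mem_sdiff.2 ⟨hfM, hfR⟩)).1
      · exact hA.1 e heA f hfA h
  · intro e he f hf h
    simp only [mem_union, mem_sdiff] at he hf
    rcases he with ⟨heM, heR⟩ | heA
    · rcases hf with ⟨hfM, hfR⟩ | hfA
      · exact hM.2 e heM f hfM h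
      · exact absurd h.symm (hd f hfA e (mem_sdiff.2 ⟨heM, heR⟩)).2
    · rcases hf with ⟨hfM, hfR⟩ | hfA
      · exact absurd h (hd e heA f (mem_sdiff.2 ⟨hfM, hfR⟩)).2
      · exact hA.2 e heA f hfA h

lemma surgery_disjoint {M A R : Finset (α × β)}
    (hd : ∀ e ∈ A, ∀ m ∈ M \ R, e.1 ≠ m.1 ∧ e.2 ≠ m.2) :
    Disjoint (M \ R) A := by
  rw [Finset.disjoint_right]
  intro e heA he
  exact (hd e heA e he).1 rfl

end Aux

section Seq

open scoped Classical in
noncomputable def boFn (M : Finset (α × β)) (u : α) : Option β :=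
  if h : Matched M u then some h.choose else none

open scoped Classical in
noncomputable def aoFn (M' : Finset (α × β)) (w : β) : Option α :=
  if h : ∃ u, (u, w) ∈ M' then some h.choose else none

lemma boFn_spec {M : Finset (α × β)} {u : α} {w : β} (h : boFn M u = some w) : (u, w) ∈ M := by
  unfold boFn at h
  split at h
  · next h' => cases h; exact h'.choose_spec
  · cases h

lemma aoFn_spec {M' : Finset (α × β)} {w : β} {u : α} (h : aoFn M' w = some u) : (u, w) ∈ M' := by
  unfold aoFn at h
  split at h
  · next h' => cases h; exact h'.choose_spec
  · cases h

lemma boFn_eq {M : Finset (α × β)} (hM : IsMatching M) {u : α} {w : β} (h : (u, w) ∈ M) :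
    boFn M u = some w := by
  have hm : Matched M u := ⟨w, h⟩
  rw [boFn, dif_pos hm]
  have := hM.1 _ hm.choose_spec _ h rfl
  rw [Prod.ext_iff] at this
  exact congrArg some this.2

lemma aoFn_eq {M' : Finset (α × β)} (hM' : IsMatching M') {u : α} {w : β} (h : (u, w) ∈ M') :
    aoFn M' w = some u := by
  have hm : ∃ u, (u, w) ∈ M' := ⟨u, h⟩
  rw [aoFn, dif_pos hm]
  have := hM'.2 _ hm.choose_spec _ h rfl
  rw [Prod.ext_iff] at this
  exact congrArg some this.1

noncomputable def altSeq (M M' : Finset (α × β)) (x : α) : ℕ → Option α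
  | 0 => some x
  | n + 1 => (altSeq M M' x n).bind fun u => (boFn M u).bind (aoFn M')

lemma altSeq_succ_some {M M' : Finset (α × β)} {x : α} {n : ℕ} {u : α}
    (h : altSeq M M' x (n + 1) = some u) :
    ∃ v w, altSeq M M' x n = some v ∧ (v, w) ∈ M ∧ (u, w) ∈ M' := by
  rw [altSeq] at h
  cases hv : altSeq M M' x n with
  | none => rw [hv] at h; simp at h
  | some v =>
    rw [hv, Option.bind_some, Option.bind_eq_some_iff] at h
    obtain ⟨w, hw, hu⟩ := h
    exact ⟨v, w, rfl, boFn_spec hw, aoFn_spec hu⟩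

lemma altSeq_pred {M M' : Finset (α × β)} {x : α} {m n : ℕ} {u : α}
    (hM : IsMatching M) (hM' : IsMatching M')
    (hm : altSeq M M' x (m + 1) = some u) (hn : altSeq M M' x (n + 1) = some u) :
    altSeq M M' x m = altSeq M M' x n := by
  obtain ⟨v, w, hv, hvw, huw⟩ := altSeq_succ_some hm
  obtain ⟨v', w', hv', hvw', huw'⟩ := altSeq_succ_some hn
  have hww : w = w' := by
    have := hM'.1 _ huw _ huw' rfl
    rw [Prod.ext_iff] at this; exact this.2
  subst hww
  have hvv : v = v' := by
    have := hM.2 _ hvw _ hvw' rfl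
    rw [Prod.ext_iff] at this; exact this.1
  rw [hv, hv', hvv]

lemma altSeq_inj {M M' : Finset (α × β)} {x : α}
    (hM : IsMatching M) (hM' : IsMatching M') (hx : ¬ Matched M' x) :
    ∀ m n u, altSeq M M' x m = some u → altSeq M M' x n = some u → m = n := by
  intro m
  induction m with
  | zero =>
    intro n u hm hn
    cases n with
    | zero => rfl
    | succ n =>
      obtain ⟨v, w, _, _, huw⟩ := altSeq_succ_some hn
      rw [altSeq] at hm; cases hm
      exact absurd ⟨w, huw⟩ hx
  | succ m ih =>
    intro n u hm hn
    cases n with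
    | zero =>
      obtain ⟨v, w, _, _, huw⟩ := altSeq_succ_some hm
      rw [altSeq] at hn; cases hn
      exact absurd ⟨w, huw⟩ hx
    | succ n =>
      obtain ⟨v, w, hv, _, _⟩ := altSeq_succ_some hm
      have := altSeq_pred hM hM' hm hn
      rw [hv] at this
      exact congrArg Nat.succ (ih n v hv this.symm)

lemma altSeq_terminates {M M' : Finset (α × β)} {x : α}
    (hM : IsMatching M) (hM' : IsMatching M') (hx : ¬ Matched M' x) :
    ∃ n, altSeq M M' x n = none := by
  classical
  by_contra h
  push_neg at h
  haveI : Inhabited α := ⟨x⟩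
  set s : Finset α := M'.image Prod.fst with hs
  have key : ∀ n : ℕ, altSeq M M' x n = some ((altSeq M M' x n).iget) := by
    intro n
    cases hh : altSeq M M' x n with
    | none => exact absurd hh (h n)
    | some v => rfl
  have hmem : ∀ n : ℕ, (altSeq M M' x (n + 1)).iget ∈ s := by
    intro n
    obtain ⟨v, w, _, _, huw⟩ := altSeq_succ_some (key (n + 1))
    exact mem_image.2 ⟨_, huw, rfl⟩
  have hinj : Function.Injective (fun i : Fin (s.card + 1) =>
      (⟨(altSeq M M' x (i + 1)).iget, hmem i⟩ : {a // a ∈ s})) := by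
    intro i j hij
    simp only [Subtype.mk.injEq] at hij
    have := altSeq_inj hM hM' hx (i + 1) (j + 1) _ (key _) (hij ▸ key _)
    exact Fin.ext (Nat.succ_injective this)
  have := Fintype.card_le_of_injective _ hinj
  simp only [Fintype.card_fin, Fintype.card_coe] at this
  omega

lemma altSeq_fail {M M' : Finset (α × β)} {x : α} {n : ℕ} {u : α}
    (hu : altSeq M M' x n = some u) (h : altSeq M M' x (n + 1) = none) :
    ¬ Matched M u ∨ ∃ w, (u, w) ∈ M ∧ ∀ u', (u', w) ∉ M' := by
  rw [altSeq, hu, Option.bind_some] at h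
  by_cases hm : Matched M u
  · right
    rw [boFn, dif_pos hm, Option.bind_some] at h
    rw [aoFn] at h
    split at h
    · cases h
    · next h' =>
      push_neg at h'
      exact ⟨_, hm.choose_spec, h'⟩
  · exact Or.inl hm

end Seq

/-- A vertex `x ∈ X` fails to participate in some maximum matching of `G` iff there is an
even-length alternating path (w.r.t. a maximum matching `M`) from `x` to a free vertex. -/
theorem stmt_0 (E M : Finset (α × β)) (hM : IsMaxMatching E M) (x : α) :
    (∃ M', IsMaxMatching E M' ∧ ¬ Matched M' x) ↔
      (∃ x', ¬ Matched M x' ∧ EvenAltPath E M x x') := by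
  classical
  obtain ⟨hME, hMm, hMmax⟩ := hM
  constructor
  · rintro ⟨M', ⟨hM'E, hM'm, hM'max⟩, hx⟩
    obtain ⟨N0, hN0⟩ := altSeq_terminates (M := M) (M' := M') (x := x) hMm hM'm hx
    have hex : ∃ n, altSeq M M' x n = none := ⟨N0, hN0⟩
    have hfind0 : Nat.find hex ≠ 0 := by
      intro h
      have := Nat.find_spec hex
      rw [h] at this
      simp [altSeq] at this
    obtain ⟨n, hn⟩ : ∃ n, Nat.find hex = n + 1 := ⟨Nat.find hex - 1, by omega⟩
    have hnone : altSeq M M' x (n + 1) = none := hn ▸ Nat.find_spec hex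
    haveI : Inhabited α := ⟨x⟩
    set f : Fin (n + 1) → α := fun i => (altSeq M M' x i).iget with hfdef
    have hkey : ∀ i : Fin (n + 1), altSeq M M' x i = some (f i) := by
      intro i
      cases hh : altSeq M M' x i with
      | none =>
        exact absurd hh (Nat.find_min hex (by rw [hn]; exact i.isLt))
      | some v => simp [hfdef, hh]
    have hu : altSeq M M' x n = some (f (Fin.last n)) := by
      have := hkey (Fin.last n)
      rwa [Fin.val_last] at this
    have hf0 : f 0 = x := by
      have := hkey 0
      rw [show ((0 : Fin (n + 1)) : ℕ) = 0 from rfl, altSeq] at this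
      exact (Option.some_injective _ this).symm
    have hfinj : Function.Injective f := by
      intro i j hij
      exact Fin.ext (altSeq_inj hMm hM'm hx i j (f i) (hkey i) (hij ▸ hkey j))
    have hstep : ∀ i : Fin n, ∃ w', (f i.castSucc, w') ∈ M ∧ (f i.succ, w') ∈ M' := by
      intro i
      have hk := hkey i.succ
      rw [Fin.val_succ] at hk
      obtain ⟨v, w', hv, hvw, huw⟩ := altSeq_succ_some hk
      have hvc : v = f i.castSucc := by
        have := hkey i.castSucc
        rw [Fin.coe_castSucc, hv] at this
        exact Option.some_injective _ this
      exact ⟨w', hvc ▸ hvw, huw⟩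
    set g : Fin n → β := fun i => (hstep i).choose with hgdef
    have hgM : ∀ i, (f i.castSucc, g i) ∈ M := fun i => (hstep i).choose_spec.1
    have hgM' : ∀ i, (f i.succ, g i) ∈ M' := fun i => (hstep i).choose_spec.2
    have hginj : Function.Injective g := by
      intro i j hij
      have := hMm.2 _ (hgM i) _ (hgM j) hij
      have := hfinj (congrArg Prod.fst this)
      exact Fin.castSucc_injective _ this
    have hfirst : ∀ p : Fin (n + 1), ∀ m ∈ M',
        m ∉ (image (fun i : Fin n => (f i.succ, g i)) univ) → f p ≠ m.1 := by
      intro p m hmM' hmR' h1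
      rcases Nat.eq_zero_or_pos (p : ℕ) with hp | hp
      · apply hx
        refine ⟨m.2, ?_⟩
        have hp0 : p = 0 := by apply Fin.ext; simp [hp]
        have hxm : x = m.1 := by
          rw [← h1, ← hf0, hp0]
        rw [hxm, Prod.mk.eta]
        exact hmM'
      · have hj : (p : ℕ) - 1 < n := by omega
        set j : Fin n := ⟨(p : ℕ) - 1, hj⟩ with hjdef
        have hpj : p = j.succ := by
          apply Fin.ext
          simp [hjdef, Fin.val_succ]
          omega
        have hme : m = (f j.succ, g j) := hM'm.1 m hmM' _ (hgM' j) (by rw [← h1, hpj])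
        exact hmR' (hme ▸ mem_image.2 ⟨j, mem_univ j, rfl⟩)
    rcases altSeq_fail hu hnone with hfree | ⟨w, huw, hwfree⟩
    · refine ⟨f (Fin.last n), hfree, n, f, g, hfinj, hginj, hf0, rfl, hgM, ?_⟩
      intro i
      refine ⟨hM'E (hgM' i), ?_⟩
      intro hmem
      have := hMm.2 _ hmem _ (hgM i) rfl
      have := hfinj (congrArg Prod.fst this)
      exact absurd this (Fin.castSucc_lt_succ (i := i)).ne'
    · exfalso
      set R' : Finset (α × β) := image (fun i : Fin n => (f i.succ, g i)) univ with hR'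
      set A' : Finset (α × β) :=
        insert (f (Fin.last n), w) (image (fun i : Fin n => (f i.castSucc, g i)) univ) with hA'
      have hR'M' : R' ⊆ M' := by
        intro e he
        obtain ⟨i, _, rfl⟩ := mem_image.1 he
        exact hgM' i
      have hA'M : A' ⊆ M := by
        intro e he
        rcases mem_insert.1 he with rfl | he'
        · exact huw
        · obtain ⟨i, _, rfl⟩ := mem_image.1 he'
          exact hgM i
      have hA'm : IsMatching A' := matching_subset hA'M hMm
      have hd' : ∀ e ∈ A', ∀ m ∈ M' \ R', e.1 ≠ m.1 ∧ e.2 ≠ m.2 := by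
        intro e he m hm
        obtain ⟨hmM', hmR'⟩ := mem_sdiff.1 hm
        rcases mem_insert.1 he with rfl | he'
        · refine ⟨hfirst _ m hmM' hmR', ?_⟩
          intro h2
          apply hwfree m.1
          have h2' : w = m.2 := h2
          rw [h2', Prod.mk.eta]
          exact hmM'
        · obtain ⟨i, _, rfl⟩ := mem_image.1 he'
          refine ⟨hfirst _ m hmM' hmR', ?_⟩
          intro h2
          apply hmR'
          have hme : m = (f i.succ, g i) := hM'm.2 m hmM' _ (hgM' i) h2.symm
          rw [hme]
          exact mem_image.2 ⟨i, mem_univ i, rfl⟩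
      have hdisj' := surgery_disjoint hd'
      have himgcard : (image (fun i : Fin n => (f i.castSucc, g i)) univ).card = n := by
        rw [Finset.card_image_of_injective _ (fun i j hij => ?_), card_univ, Fintype.card_fin]
        exact hginj (congrArg Prod.snd hij)
      have hA'card : A'.card = n + 1 := by
        rw [hA', card_insert_of_notMem, himgcard]
        intro hmem
        obtain ⟨i, _, hi⟩ := mem_image.1 hmem
        have := hfinj (congrArg Prod.fst hi)
        exact absurd this (Fin.castSucc_lt_last i).ne
      have hR'card : R'.card = n := by
        rw [hR', Finset.card_image_of_injective _ (fun i j hij => ?_), card_univ,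
          Fintype.card_fin]
        exact hginj (congrArg Prod.snd hij)
      have hnM' : n ≤ M'.card := hR'card ▸ card_le_card hR'M'
      have hcard' : ((M' \ R') ∪ A').card = M'.card + 1 := by
        rw [card_union_of_disjoint hdisj', card_sdiff_of_subset hR'M', hR'card, hA'card]
        omega
      have hle := hM'max ((M' \ R') ∪ A')
        (union_subset (fun e he => hM'E (mem_sdiff.1 he).1) (fun e he => hME (hA'M he)))
        (matching_surgery hM'm hA'm hd')
      omega
  · rintro ⟨x', hx', k, f, g, hfinj, hginj, hf0, hfl, hgM, hgE⟩
    cases k with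
    | zero =>
      refine ⟨M, ⟨hME, hMm, hMmax⟩, ?_⟩
      have hxx : x = x' := by rw [← hf0, ← hfl]; rfl
      exact hxx ▸ hx'
    | succ k =>
      set R : Finset (α × β) := image (fun i : Fin (k + 1) => (f i.castSucc, g i)) univ with hR
      set A : Finset (α × β) := image (fun i : Fin (k + 1) => (f i.succ, g i)) univ with hA
      have hRM : R ⊆ M := by
        intro e he
        obtain ⟨i, _, rfl⟩ := mem_image.1 he
        exact hgM i
      have hAE : A ⊆ E := by
        intro e he
        obtain ⟨i, _, rfl⟩ := mem_image.1 he
        exact (hgE i).1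
      have hAm : IsMatching A := by
        constructor
        · intro e he f' hf' h
          obtain ⟨i, _, rfl⟩ := mem_image.1 he
          obtain ⟨j, _, rfl⟩ := mem_image.1 hf'
          have : i = j := Fin.succ_injective _ (hfinj h)
          rw [this]
        · intro e he f' hf' h
          obtain ⟨i, _, rfl⟩ := mem_image.1 he
          obtain ⟨j, _, rfl⟩ := mem_image.1 hf'
          have : i = j := hginj h
          rw [this]
      have hd : ∀ e ∈ A, ∀ m ∈ M \ R, e.1 ≠ m.1 ∧ e.2 ≠ m.2 := by
        intro e he m hm
        obtain ⟨i, _, rfl⟩ := mem_image.1 he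
        obtain ⟨hmM, hmR⟩ := mem_sdiff.1 hm
        constructor
        · intro h1
          by_cases hl : i.succ = Fin.last (k + 1)
          · apply hx'
            refine ⟨m.2, ?_⟩
            have hxm : x' = m.1 := by rw [← h1, hl, hfl]
            rw [hxm, Prod.mk.eta]
            exact hmM
          · obtain ⟨j, hj⟩ : ∃ j : Fin (k + 1), i.succ = j.castSucc :=
              ⟨i.succ.castPred hl, (Fin.castSucc_castPred _ hl).symm⟩
            apply hmR
            have hme : m = (f j.castSucc, g j) :=
              hMm.1 m hmM _ (hgM j) (by rw [← h1, hj])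
            rw [hme]
            exact mem_image.2 ⟨j, mem_univ j, rfl⟩
        · intro h2
          apply hmR
          have hme : m = (f i.castSucc, g i) := hMm.2 m hmM _ (hgM i) h2.symm
          rw [hme]
          exact mem_image.2 ⟨i, mem_univ i, rfl⟩
      have hdisj := surgery_disjoint hd
      have hRcard : R.card = k + 1 := by
        rw [hR, Finset.card_image_of_injective _ (fun i j hij => ?_), card_univ,
          Fintype.card_fin]
        exact hginj (congrArg Prod.snd hij)
      have hAcard : A.card = k + 1 := by
        rw [hA, Finset.card_image_of_injective _ (fun i j hij => ?_), card_univ,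
          Fintype.card_fin]
        exact hginj (congrArg Prod.snd hij)
      have hkM : k + 1 ≤ M.card := hRcard ▸ card_le_card hRM
      have hcard : ((M \ R) ∪ A).card = M.card := by
        rw [card_union_of_disjoint hdisj, card_sdiff_of_subset hRM, hRcard, hAcard]
        omega
      refine ⟨(M \ R) ∪ A, ⟨?_, matching_surgery hMm hAm hd, ?_⟩, ?_⟩
      · exact union_subset (fun e he => hME (mem_sdiff.1 he).1) hAE
      · intro M'' h1 h2
        rw [hcard]
        exact hMmax M'' h1 h2
      · rintro ⟨y, hy⟩
        rcases mem_union.1 hy with hy' | hy'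
        · obtain ⟨hyM, hyR⟩ := mem_sdiff.1 hy'
          apply hyR
          have h00 : (0 : Fin (k + 1)).castSucc = (0 : Fin (k + 2)) := rfl
          have hme : (x, y) = (f (0 : Fin (k + 1)).castSucc, g 0) :=
            hMm.1 _ hyM _ (hgM 0) (by rw [h00, hf0])
          rw [hme]
          exact mem_image.2 ⟨0, mem_univ _, rfl⟩
        · obtain ⟨i, _, hi⟩ := mem_image.1 hy'
          have : f i.succ = x := congrArg Prod.fst hi
          rw [← hf0] at this
          exact Fin.succ_ne_zero i (hfinj this)
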